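/- arXiv:2009.05218 — 5 statements merged into one kernel-verified Lean document; each statement's English description precedes it below -/
import Mathlib

section
/- Let X be a finite abstract simplicial complex of dimension at least 2 and let h ∈ C² satisfy |h| ≤ |h + h'| for all h' ∈ B₂ (i.e. |h| = dist(h, B₂)). Let h₁, …, h_s be the connected components of h. Then each component is itself minimal: for every i ∈ [s] and every h' ∈ B₂, |h_i| ≤ |h_i + h'|. -/
/-- A finite abstract simplicial complex on a finite vertex set `V`:
a nonempty collection of finite subsets of `V` closed under taking subsets. -/
structure AbsSimplicialComplex (V : Type*) [DecidableEq V] [Fintype V] where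
  faces : Finset (Finset V)
  nonempty' : faces.Nonempty
  down_closed : ∀ s ∈ faces, ∀ t ⊆ s, t ∈ faces

namespace AbsSimplicialComplex

variable {V : Type*} [DecidableEq V] [Fintype V]

/-- `X.sk i` is `X(i)`, the set of faces of cardinality `i + 1` (dimension `i`). -/
def sk (X : AbsSimplicialComplex V) (i : ℕ) : Finset (Finset V) :=
  X.faces.filter fun s => s.card = i + 1

/-- `C^i`: the `𝔽₂`-vector space of functions from `X(i)` to `𝔽₂`. -/
abbrev Chain (X : AbsSimplicialComplex V) (i : ℕ) : Type _ :=
  { s // s ∈ X.sk i } → ZMod 2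

/-- The coboundary operator `δ_i : C^i → C^{i+1}`,
`(δ_i f) t = ∑_{u ∈ t} f (t \ {u}) = ∑_{s ∈ X(i), s ⊆ t} f s`. -/
def delta (X : AbsSimplicialComplex V) (i : ℕ) :
    X.Chain i →ₗ[ZMod 2] X.Chain (i + 1) where
  toFun f t := ∑ s : { s // s ∈ X.sk i }, if s.val ⊆ t.val then f s else 0
  map_add' f g := by
    funext t
    simp only [Pi.add_apply, ← Finset.sum_add_distrib]
    exact Finset.sum_congr rfl fun s _ => by split <;> simp
  map_smul' c f := by
    funext t
    simp only [Pi.smul_apply, smul_eq_mul, RingHom.id_apply, Finset.mul_sum]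
    exact Finset.sum_congr rfl fun s _ => by split <;> simp

/-- The boundary operator `∂_{i+1} : C^{i+1} → C^i`,
`(∂ f) s = ∑_{t ∈ X(i+1), t ⊇ s} f t`. -/
def boundary (X : AbsSimplicialComplex V) (i : ℕ) :
    X.Chain (i + 1) →ₗ[ZMod 2] X.Chain i where
  toFun f s := ∑ t : { t // t ∈ X.sk (i + 1) }, if s.val ⊆ t.val then f t else 0
  map_add' f g := by
    funext s
    simp only [Pi.add_apply, ← Finset.sum_add_distrib]
    exact Finset.sum_congr rfl fun t _ => by split <;> simp
  map_smul' c f := by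
    funext s
    simp only [Pi.smul_apply, smul_eq_mul, RingHom.id_apply, Finset.mul_sum]
    exact Finset.sum_congr rfl fun t _ => by split <;> simp

/-- The `𝔽₂`-valued pairing `⟨f, g⟩_i = ∑_{s ∈ X(i)} f s * g s`. -/
def pairing (X : AbsSimplicialComplex V) (i : ℕ) (f g : X.Chain i) : ZMod 2 :=
  ∑ s : { s // s ∈ X.sk i }, f s * g s

/-- The Hamming weight of a chain: the number of faces on which it is nonzero. -/
def wt (X : AbsSimplicialComplex V) {i : ℕ} (f : X.Chain i) : ℕ :=
  (Finset.univ.filter fun s => f s ≠ 0).card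

end AbsSimplicialComplex

namespace AbsSimplicialComplex

variable {V : Type*} [DecidableEq V] [Fintype V]

/-- `dist(h, B₂) = min_{g ∈ B₂} |h + g|`, the Hamming distance from the 2-chain
`h` to the space `B₂ = im ∂₃` of boundaries of 3-chains. -/
noncomputable def distB2 (X : AbsSimplicialComplex V) (h : X.Chain 2) : ℕ :=
  sInf { n : ℕ | ∃ g ∈ LinearMap.range (X.boundary 2), X.wt (h + g) = n }

/-- Two triangles share an edge if some edge of `X` is contained in both. -/
def SharesEdge (X : AbsSimplicialComplex V) (T T' : Finset V) : Prop :=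
  ∃ e ∈ X.sk 1, e ⊆ T ∧ e ⊆ T'

/-- A 2-chain is connected if any two triangles in its support are joined by a
path of triangles of the support in which consecutive triangles share an edge. -/
def IsConnectedChain (X : AbsSimplicialComplex V) (h : X.Chain 2) : Prop :=
  ∀ T T' : { s // s ∈ X.sk 2 }, h T ≠ 0 → h T' ≠ 0 →
    Relation.ReflTransGen
      (fun a b : { s // s ∈ X.sk 2 } =>
        h a ≠ 0 ∧ h b ≠ 0 ∧ X.SharesEdge a.val b.val) T T'

end AbsSimplicialComplex

section AuxWt

variable {V : Type*} [DecidableEq V] [Fintype V]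

lemma wt_add_le (X : AbsSimplicialComplex V) {i : ℕ} (f g : X.Chain i) :
    X.wt (f + g) ≤ X.wt f + X.wt g := by
  classical
  unfold AbsSimplicialComplex.wt
  refine le_trans (Finset.card_le_card ?_) (Finset.card_union_le _ _)
  intro T hT
  simp only [Finset.mem_filter, Finset.mem_union, Finset.mem_univ, true_and] at *
  by_contra hcon
  push_neg at hcon
  simp [Pi.add_apply, hcon.1, hcon.2] at hT

lemma wt_add_eq (X : AbsSimplicialComplex V) {i : ℕ} (f g : X.Chain i)
    (hd : ∀ T, ¬(f T ≠ 0 ∧ g T ≠ 0)) :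
    X.wt (f + g) = X.wt f + X.wt g := by
  classical
  unfold AbsSimplicialComplex.wt
  rw [← Finset.card_union_of_disjoint]
  · congr 1
    ext T
    simp only [Finset.mem_filter, Finset.mem_union, Finset.mem_univ, true_and,
      Pi.add_apply]
    constructor
    · intro hT
      by_contra hcon
      push_neg at hcon
      simp [hcon.1, hcon.2] at hT
    · rintro (hT | hT)
      · have : g T = 0 := by
          by_contra hg; exact hd T ⟨hT, hg⟩
        simpa [this] using hT
      · have : f T = 0 := by
          by_contra hf; exact hd T ⟨hf, hT⟩
        simpa [this] using hT
  · rw [Finset.disjoint_filter]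
    intro T _ hfT hgT
    exact hd T ⟨hfT, hgT⟩

end AuxWt

open AbsSimplicialComplex in
/-- If `h ∈ C²` is of minimal weight in its coset of `B₂`
(`|h| ≤ |h + h'|` for all `h' ∈ B₂`), and `h₁, …, h_s` are its connected
components, then each component is itself minimal: for every `i` and every
`h' ∈ B₂`, `|h_i| ≤ |h_i + h'|`. -/
theorem components_of_minimal_chain_minimal
    {V : Type*} [DecidableEq V] [Fintype V]
    (X : AbsSimplicialComplex V) (hdim : ∃ s ∈ X.faces, 3 ≤ s.card)
    (h : X.Chain 2)
    (hmin : ∀ h' ∈ LinearMap.range (X.boundary 2), X.wt h ≤ X.wt (h + h'))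
    (s : ℕ) (hc : Fin s → X.Chain 2)
    (hsum : ∑ i, hc i = h)
    (hconn : ∀ i, X.IsConnectedChain (hc i))
    (hdisj : ∀ i j, i ≠ j → ∀ T : { s // s ∈ X.sk 2 },
      ¬(hc i T ≠ 0 ∧ hc j T ≠ 0))
    (hsep : ∀ i j, i ≠ j → ∀ T T' : { s // s ∈ X.sk 2 },
      hc i T ≠ 0 → hc j T' ≠ 0 → ¬ X.SharesEdge T.val T'.val) :
    ∀ i, ∀ h' ∈ LinearMap.range (X.boundary 2),
      X.wt (hc i) ≤ X.wt (hc i + h') := by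
  classical
  intro i h' hb
  set r : X.Chain 2 := ∑ j ∈ Finset.univ.erase i, hc j with hr
  have hhr : h = hc i + r := by
    rw [hr, ← Finset.add_sum_erase _ _ (Finset.mem_univ i)] at *
    exact hsum.symm
  have hd : ∀ T, ¬(hc i T ≠ 0 ∧ r T ≠ 0) := by
    rintro T ⟨hiT, hrT⟩
    apply hrT
    rw [hr]
    simp only [Finset.sum_apply]
    refine Finset.sum_eq_zero fun j hj => ?_
    have hji : j ≠ i := (Finset.mem_erase.mp hj).1
    by_contra hjT
    exact hdisj i j (Ne.symm hji) T ⟨hiT, hjT⟩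
  have e1 : X.wt h = X.wt (hc i) + X.wt r := by
    rw [hhr]; exact wt_add_eq X _ _ hd
  have e2 : X.wt (h + h') ≤ X.wt (hc i + h') + X.wt r := by
    have : h + h' = (hc i + h') + r := by rw [hhr]; ring
    rw [this]
    exact wt_add_le X _ _
  have := (e1 ▸ hmin h' hb).trans e2
  omega
end

section
/- Let X be a finite abstract simplicial complex of dimension at least 2 and let r be a positive integer. Suppose that every connected 2-chain h₀ ∈ C² with |h₀| < r and ∂₂ h₀ = 0 lies in B₂. Then every h ∈ Z₂ \ B₂ satisfies dist(h, B₂) ≥ r. -/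
namespace AbsSimplicialComplex

variable {V : Type*} [DecidableEq V] [Fintype V]

namespace Aux12

variable {V : Type*} [DecidableEq V] [Fintype V]

lemma mem_sk_card (X : AbsSimplicialComplex V) {i : ℕ} {s : Finset V} (h : s ∈ X.sk i) :
    s.card = i + 1 := (Finset.mem_filter.mp h).2

lemma mem_sk_faces (X : AbsSimplicialComplex V) {i : ℕ} {s : Finset V} (h : s ∈ X.sk i) :
    s ∈ X.faces := (Finset.mem_filter.mp h).1

lemma boundary_apply (X : AbsSimplicialComplex V) (i : ℕ) (f : X.Chain (i + 1))
    (s : { s // s ∈ X.sk i }) :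
    X.boundary i f s = ∑ t : { t // t ∈ X.sk (i + 1) }, if s.val ⊆ t.val then f t else 0 := rfl

lemma bb_zero (X : AbsSimplicialComplex V) (x : X.Chain 3) :
    X.boundary 1 (X.boundary 2 x) = 0 := by
  funext s
  rw [boundary_apply, Pi.zero_apply]
  have h1 : ∀ t : { t // t ∈ X.sk (1 + 1) },
      (if s.val ⊆ t.val then X.boundary 2 x t else 0)
        = ∑ u : { u // u ∈ X.sk (2 + 1) },
            if s.val ⊆ t.val ∧ t.val ⊆ u.val then x u else 0 := by
    intro t
    rw [boundary_apply]
    split_ifs with h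
    · exact Finset.sum_congr rfl fun u _ => by simp [h]
    · simp [h]
  rw [Finset.sum_congr rfl fun t _ => h1 t, Finset.sum_comm]
  apply Finset.sum_eq_zero
  intro u _
  rw [Finset.sum_ite, Finset.sum_const, Finset.sum_const_zero, add_zero]
  have hscard : s.val.card = 2 := mem_sk_card X s.2
  have hucard : u.val.card = 4 := mem_sk_card X u.2
  by_cases hsu : s.val ⊆ u.val
  · have hmem : ∀ a ∈ u.val \ s.val, insert a s.val ∈ X.sk (1 + 1) := by
      intro a ha
      obtain ⟨hau, has⟩ := Finset.mem_sdiff.mp ha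
      refine Finset.mem_filter.mpr ⟨X.down_closed u.val (mem_sk_faces X u.2) _
        (Finset.insert_subset hau hsu), ?_⟩
      rw [Finset.card_insert_of_notMem has, hscard]
    have h2 : (u.val \ s.val).card = 2 := by
      rw [Finset.card_sdiff_of_subset hsu, hucard, hscard]
    have key : ∀ c : ℕ, (u.val \ s.val).card = c → c • x u = 0 := by
      intro c hc
      rw [← hc, h2, two_nsmul, CharTwo.add_self_eq_zero]
    apply key
    refine Finset.card_bij (fun a ha => ⟨insert a s.val, hmem a ha⟩) ?_ ?_ ?_
    · intro a ha
      obtain ⟨hau, has⟩ := Finset.mem_sdiff.mp ha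
      exact Finset.mem_filter.mpr ⟨Finset.mem_univ _,
        Finset.subset_insert _ _, Finset.insert_subset hau hsu⟩
    · intro a ha b hb hab
      obtain ⟨hau, has⟩ := Finset.mem_sdiff.mp ha
      have habv : insert a s.val = insert b s.val := congrArg Subtype.val hab
      have ha' : a ∈ insert b s.val := habv ▸ Finset.mem_insert_self a s.val
      rcases Finset.mem_insert.mp ha' with h | h
      · exact h
      · exact absurd h has
    · intro t ht
      obtain ⟨-, hst, htu⟩ := Finset.mem_filter.mp ht
      have htc : t.val.card = 3 := mem_sk_card X t.2
      have hone : (t.val \ s.val).card = 1 := by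
        rw [Finset.card_sdiff_of_subset hst, htc, hscard]
      obtain ⟨a, haeq⟩ := Finset.card_eq_one.mp hone
      have haa : a ∈ t.val \ s.val := haeq ▸ Finset.mem_singleton_self a
      obtain ⟨hat, has⟩ := Finset.mem_sdiff.mp haa
      refine ⟨a, Finset.mem_sdiff.mpr ⟨htu hat, has⟩, ?_⟩
      apply Subtype.ext
      show insert a s.val = t.val
      have hun : s.val ∪ (t.val \ s.val) = t.val := Finset.union_sdiff_of_subset hst
      rw [haeq] at hun
      rw [Finset.insert_eq, Finset.union_comm]
      exact hun
  · have key : ∀ F : Finset { t // t ∈ X.sk (1 + 1) }, F = ∅ → F.card • x u = 0 := by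
      intro F hF
      rw [hF, Finset.card_empty, zero_nsmul]
    apply key
    exact Finset.filter_eq_empty_iff.mpr fun t _ hP => hsu (hP.1.trans hP.2)

lemma cycle_small (X : AbsSimplicialComplex V) (r : ℕ)
    (hlocal : ∀ h₀ : X.Chain 2, X.IsConnectedChain h₀ → X.wt h₀ < r →
      X.boundary 1 h₀ = 0 → h₀ ∈ LinearMap.range (X.boundary 2)) :
    ∀ n (f : X.Chain 2), X.wt f ≤ n → X.boundary 1 f = 0 → X.wt f < r →
      f ∈ LinearMap.range (X.boundary 2) := by
  intro n
  induction n using Nat.strong_induction_on with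
  | _ n ih =>
    intro f hfn hfb hfr
    classical
    by_cases hf0 : f = 0
    · exact hf0 ▸ ⟨0, map_zero _⟩
    · obtain ⟨T, hT⟩ : ∃ T, f T ≠ 0 := by
        by_contra hc
        push_neg at hc
        exact hf0 (funext fun t => hc t)
      set R : { s // s ∈ X.sk 2 } → { s // s ∈ X.sk 2 } → Prop :=
        fun a b => f a ≠ 0 ∧ f b ≠ 0 ∧ X.SharesEdge a.val b.val with hR
      have hRsymm : Symmetric R := by
        rintro a b ⟨h1, h2, e, he, hea, heb⟩
        exact ⟨h2, h1, e, he, heb, hea⟩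
      set conn : { s // s ∈ X.sk 2 } → Prop :=
        fun t => Relation.ReflTransGen R T t with hconn
      set f₀ : X.Chain 2 := fun t => if conn t then f t else 0 with hf₀def
      have hf₀ne : ∀ t, f₀ t ≠ 0 → conn t ∧ f t ≠ 0 := by
        intro t h
        by_cases hc : conn t
        · refine ⟨hc, ?_⟩
          simpa [hf₀def, hc] using h
        · simp [hf₀def, hc] at h
      have hf₀eq : ∀ t, conn t → f₀ t = f t := fun t hc => by simp [hf₀def, hc]
      have hsub : (Finset.univ.filter fun t => f₀ t ≠ 0)
          ⊆ (Finset.univ.filter fun t => f t ≠ 0) := by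
        intro t ht
        simp only [Finset.mem_filter, Finset.mem_univ, true_and] at ht ⊢
        exact (hf₀ne t ht).2
      have hwt₀ : X.wt f₀ ≤ X.wt f := Finset.card_le_card hsub
      have hpath : ∀ a b, Relation.ReflTransGen R a b → conn a →
          conn b ∧ Relation.ReflTransGen
            (fun x y : { s // s ∈ X.sk 2 } =>
              f₀ x ≠ 0 ∧ f₀ y ≠ 0 ∧ X.SharesEdge x.val y.val) a b := by
        intro a b hab hca
        induction hab with
        | refl => exact ⟨hca, Relation.ReflTransGen.refl⟩
        | tail hab' hbc ihb =>
          obtain ⟨hcc, hpath'⟩ := ihb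
          have hcd : conn _ := hcc.tail hbc
          refine ⟨hcd, hpath'.tail ?_⟩
          refine ⟨?_, ?_, hbc.2.2⟩
          · rw [hf₀eq _ hcc]; exact hbc.1
          · rw [hf₀eq _ hcd]; exact hbc.2.1
      have hconn₀ : X.IsConnectedChain f₀ := by
        intro a b ha hb
        have hca := (hf₀ne a ha).1
        have hcb := (hf₀ne b hb).1
        have hat : Relation.ReflTransGen R a T :=
          by haveI : Std.Symm R := ⟨fun _ _ h => hRsymm h⟩; exact Std.Symm.symm _ _ hca
        exact (hpath a b (hat.trans hcb) hca).2
      have hb₀ : X.boundary 1 f₀ = 0 := by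
        funext s
        rw [boundary_apply, Pi.zero_apply]
        by_cases hex : ∃ t : { t // t ∈ X.sk (1 + 1) }, s.val ⊆ t.val ∧ f t ≠ 0 ∧ conn t
        · obtain ⟨t0, hst0, hft0, hct0⟩ := hex
          have heq : ∀ t : { t // t ∈ X.sk (1 + 1) },
              (if s.val ⊆ t.val then f₀ t else 0) = (if s.val ⊆ t.val then f t else 0) := by
            intro t
            by_cases hst : s.val ⊆ t.val
            · rw [if_pos hst, if_pos hst]
              by_cases hft : f t = 0
              · by_cases hct : conn t
                · rw [hf₀eq t hct]
                · simp [hf₀def, hct, hft]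
              · have hct : conn t := hct0.tail ⟨hft0, hft, ⟨s.val, s.2, hst0, hst⟩⟩
                exact hf₀eq t hct
            · rw [if_neg hst, if_neg hst]
          rw [Finset.sum_congr rfl fun t _ => heq t]
          have h2 := congrFun hfb s
          rw [boundary_apply, Pi.zero_apply] at h2
          exact h2
        · apply Finset.sum_eq_zero
          intro t _
          by_cases hst : s.val ⊆ t.val
          · rw [if_pos hst]
            by_contra hne
            obtain ⟨hct, hft⟩ := hf₀ne t hne
            exact hex ⟨t, hst, hft, hct⟩
          · rw [if_neg hst]
      have hmem₀ := hlocal f₀ hconn₀ (lt_of_le_of_lt hwt₀ hfr) hb₀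
      have hb' : X.boundary 1 (f + f₀) = 0 := by
        rw [map_add, hfb, hb₀, add_zero]
      have hTzero : (f + f₀) T = 0 := by
        have hcT : conn T := Relation.ReflTransGen.refl
        show f T + f₀ T = 0
        rw [hf₀eq T hcT, CharTwo.add_self_eq_zero]
      have hsupp' : ∀ t, (f + f₀) t ≠ 0 → f t ≠ 0 := by
        intro t ht
        by_cases hct : conn t
        · exfalso
          apply ht
          show f t + f₀ t = 0
          rw [hf₀eq t hct, CharTwo.add_self_eq_zero]
        · intro hf
          apply ht
          show f t + f₀ t = 0
          simp [hf, hf₀def, hct]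
      have hlt : X.wt (f + f₀) < X.wt f := by
        apply Finset.card_lt_card
        rw [Finset.ssubset_iff_of_subset]
        · refine ⟨T, ?_, ?_⟩
          · exact Finset.mem_filter.mpr ⟨Finset.mem_univ T, hT⟩
          · simp only [Finset.mem_filter, Finset.mem_univ, true_and, not_not]
            exact hTzero
        · intro t ht
          simp only [Finset.mem_filter, Finset.mem_univ, true_and] at ht ⊢
          exact hsupp' t ht
      have hmem' := ih (X.wt (f + f₀)) (lt_of_lt_of_le hlt hfn) (f + f₀) le_rfl hb'
        (lt_trans hlt hfr)
      have hfeq : f = (f + f₀) + f₀ := by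
        funext t
        show f t = (f t + f₀ t) + f₀ t
        rw [add_assoc, CharTwo.add_self_eq_zero, add_zero]
      rw [hfeq]
      exact Submodule.add_mem _ hmem' hmem₀

end Aux12

end AbsSimplicialComplex

open AbsSimplicialComplex in
/-- If every connected 2-chain `h₀` with `|h₀| < r` and
`∂₂ h₀ = 0` lies in `B₂`, then every `h ∈ Z₂ \ B₂` satisfies
`dist(h, B₂) ≥ r`. -/
theorem nontrivial_cycle_far_from_boundaries
    {V : Type*} [DecidableEq V] [Fintype V]
    (X : AbsSimplicialComplex V) (hdim : ∃ s ∈ X.faces, 3 ≤ s.card)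
    (r : ℕ) (hr : 0 < r)
    (hlocal : ∀ h₀ : X.Chain 2, X.IsConnectedChain h₀ → X.wt h₀ < r →
      X.boundary 1 h₀ = 0 → h₀ ∈ LinearMap.range (X.boundary 2)) :
    ∀ h : X.Chain 2, h ∈ LinearMap.ker (X.boundary 1) →
      h ∉ LinearMap.range (X.boundary 2) → r ≤ X.distB2 h := by
  intro h hker hnot
  by_contra hlt
  push_neg at hlt
  unfold distB2 at hlt
  have hSne : { n : ℕ | ∃ g ∈ LinearMap.range (X.boundary 2), X.wt (h + g) = n }.Nonempty :=
    ⟨X.wt h, 0, Submodule.zero_mem _, by rw [add_zero]⟩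
  obtain ⟨g, hg, hwt⟩ := Nat.sInf_mem hSne
  obtain ⟨x, hx⟩ := hg
  have hbg : X.boundary 1 g = 0 := by rw [← hx]; exact AbsSimplicialComplex.Aux12.bb_zero X x
  have hbf : X.boundary 1 (h + g) = 0 := by
    rw [map_add, LinearMap.mem_ker.mp hker, hbg, add_zero]
  have hwtlt : X.wt (h + g) < r := by rw [hwt]; exact hlt
  have hmemf := AbsSimplicialComplex.Aux12.cycle_small X r hlocal (X.wt (h + g)) (h + g)
    le_rfl hbf hwtlt
  apply hnot
  have hfeq : h = (h + g) + g := by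
    funext t
    show h t = (h t + g t) + g t
    rw [add_assoc, CharTwo.add_self_eq_zero, add_zero]
  rw [hfeq]
  exact Submodule.add_mem _ hmemf ⟨x, hx⟩
end

section
/- Let D be a finite DAG in which every non-leaf node has exactly two incoming nodes (its children), with a designated root, and let κ be a function from the nodes of D to the natural numbers such that κ(ν) ≤ κ(ν₁) + κ(ν₂) whenever ν₁, ν₂ are the two incoming nodes of ν, and κ(ν) ≤ 1 for every leaf ν. Let r ≥ 2 be an integer with κ(root) ≥ r. Then there exists a node ν of D with r/2 ≤ κ(ν) < r. -/
/-- In a finite DAG (given by a node type `N`, a designated `root`, and a map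
`kids` assigning to each non-leaf node its two incoming nodes; acyclicity is
expressed by well-foundedness of the child relation, and every node is
reachable from the root by following incoming edges), STATEMENT 13 says:
if `κ : N → ℕ` satisfies `κ ν ≤ κ ν₁ + κ ν₂` whenever `ν₁, ν₂` are the two
incoming nodes of `ν`, and `κ ν ≤ 1` at every leaf, and if `r ≥ 2` with
`κ(root) ≥ r`, then some node `ν` has `r/2 ≤ κ ν < r`
(stated as `r ≤ 2 * κ ν ∧ κ ν < r`). -/
theorem dag_intermediate_complexity_node
    {N : Type*} [Fintype N] (root : N) (kids : N → Option (N × N))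
    (hacyc : WellFounded fun a b : N =>
      ∃ c, kids b = some (a, c) ∨ kids b = some (c, a))
    (hreach : ∀ n : N, Relation.ReflTransGen
      (fun b a : N => ∃ c, kids b = some (a, c) ∨ kids b = some (c, a)) root n)
    (κ : N → ℕ)
    (hsub : ∀ n a b : N, kids n = some (a, b) → κ n ≤ κ a + κ b)
    (hleaf : ∀ n : N, kids n = none → κ n ≤ 1)
    (r : ℕ) (hr : 2 ≤ r) (hroot : r ≤ κ root) :
    ∃ n : N, r ≤ 2 * κ n ∧ κ n < r := by
  suffices h : ∀ n : N, r ≤ κ n → ∃ m : N, r ≤ 2 * κ m ∧ κ m < r from h root hroot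
  intro n
  induction n using hacyc.induction with
  | _ n ih =>
    intro hn
    match hk : kids n with
    | none =>
      exact absurd hn (by have := hleaf n hk; omega)
    | some (a, b) =>
      have hs := hsub n a b hk
      rcases le_total (κ a) (κ b) with hab | hab
      · by_cases hb : r ≤ κ b
        · exact ih b ⟨a, Or.inr hk⟩ hb
        · exact ⟨b, by omega, by omega⟩
      · by_cases ha : r ≤ κ a
        · exact ih a ⟨b, Or.inl hk⟩ ha
        · exact ⟨a, by omega, by omega⟩
end

section
/- Let Λ be a system of linear equations over F₂ in n variables (each equation a pair (A, b) with A ⊆ [n] and b ∈ F₂, meaning Σ_{i∈A} x_i = b), and suppose Λ does not admit any ⊕-resolution refutation of width at most 2t. Then there exist unit vectors u_S in a real inner product space, indexed by the subsets S ⊆ [n] with |S| ≤ t, such that: (a) ⟨u_{S₁}, u_{S₂}⟩ = ⟨u_{S₃}, u_{S₄}⟩ whenever S₁ Δ S₂ = S₃ Δ S₄ and |S₁|,|S₂|,|S₃|,|S₄| ≤ t; and (b) for every equation (T, b_T) ∈ Λ with |T| ≤ t, ⟨u_T, u_∅⟩ = (−1)^{b_T}. -/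
/-- Width-`w` ⊕-resolution derivability from a system `Λ` of `𝔽₂`-linear
equations in `n` variables, each equation a pair `(A, b)` with `A ⊆ [n]` the
set of variables appearing and `b ∈ 𝔽₂` (meaning `∑_{i ∈ A} x_i = b`).
Every equation appearing in the derivation (including the axioms used) has at
most `w` variables; the only inference rule derives `(A₁ Δ A₂, b₁ + b₂)` from
`(A₁, b₁)` and `(A₂, b₂)`. -/
inductive XorDerivW {n : ℕ} (Λ : Set (Finset (Fin n) × ZMod 2)) (w : ℕ) :
    Finset (Fin n) × ZMod 2 → Prop
  | ax {e : Finset (Fin n) × ZMod 2} (he : e ∈ Λ) (hw : e.1.card ≤ w) :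
      XorDerivW Λ w e
  | res {A₁ A₂ : Finset (Fin n)} {b₁ b₂ : ZMod 2}
      (h₁ : XorDerivW Λ w (A₁, b₁)) (h₂ : XorDerivW Λ w (A₂, b₂))
      (hw : (symmDiff A₁ A₂).card ≤ w) :
      XorDerivW Λ w (symmDiff A₁ A₂, b₁ + b₂)

/-- If `Λ` admits no ⊕-resolution refutation (derivation of
`(∅, 1)`) of width at most `2t`, then there exist unit vectors `u_S` in a real
inner product space, indexed by the subsets `S ⊆ [n]` with `|S| ≤ t`, such that
(a) `⟨u_{S₁}, u_{S₂}⟩ = ⟨u_{S₃}, u_{S₄}⟩` whenever `S₁ Δ S₂ = S₃ Δ S₄` and all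
four sets have size at most `t`, and (b) for every equation `(T, b_T) ∈ Λ` with
`|T| ≤ t`, `⟨u_T, u_∅⟩ = (-1)^{b_T}`. -/
theorem sos_vectors_of_no_low_width_refutation
    (n t : ℕ) (Λ : Set (Finset (Fin n) × ZMod 2))
    (hnoref : ¬ XorDerivW Λ (2 * t) (∅, 1)) :
    ∃ (d : ℕ) (u : Finset (Fin n) → EuclideanSpace ℝ (Fin d)),
      (∀ S : Finset (Fin n), S.card ≤ t → ‖u S‖ = 1) ∧
      (∀ S₁ S₂ S₃ S₄ : Finset (Fin n),
        S₁.card ≤ t → S₂.card ≤ t → S₃.card ≤ t → S₄.card ≤ t →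
        symmDiff S₁ S₂ = symmDiff S₃ S₄ →
        (inner ℝ (u S₁) (u S₂) : ℝ) = inner ℝ (u S₃) (u S₄)) ∧
      (∀ (T : Finset (Fin n)) (b : ZMod 2), (T, b) ∈ Λ → T.card ≤ t →
        (inner ℝ (u T) (u ∅) : ℝ) = (-1 : ℝ) ^ b.val) := by
  classical
  have key : ∀ b b' : ZMod 2, b ≠ b' → b + b' = 1 := by decide
  have hz2 : ∀ b : ZMod 2, b = 0 ∨ b = 1 := by decide
  have huniq : ∀ (A : Finset (Fin n)) (b b' : ZMod 2),
      XorDerivW Λ (2 * t) (A, b) → XorDerivW Λ (2 * t) (A, b') → b = b' := by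
    intro A b b' h h'
    by_contra hne
    have h0 := XorDerivW.res h h' (by simp)
    rw [symmDiff_self, key b b' hne] at h0
    exact hnoref (by simpa using h0)
  have hcard : ∀ S₁ S₂ : Finset (Fin n), S₁.card ≤ t → S₂.card ≤ t →
      (symmDiff S₁ S₂).card ≤ 2 * t := by
    intro S₁ S₂ h₁ h₂
    calc (symmDiff S₁ S₂).card ≤ (S₁ ∪ S₂).card :=
          Finset.card_le_card symmDiff_le_sup
      _ ≤ S₁.card + S₂.card := Finset.card_union_le _ _
      _ ≤ 2 * t := by omega
  have hid : ∀ a b c : Finset (Fin n),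
      symmDiff (symmDiff a c) (symmDiff b c) = symmDiff a b := by
    intro a b c
    rw [symmDiff_comm b c, symmDiff_assoc, symmDiff_symmDiff_cancel_left]
  have hid2 : ∀ a b c : Finset (Fin n),
      symmDiff (symmDiff a b) (symmDiff b c) = symmDiff a c := by
    intro a b c
    rw [symmDiff_assoc, symmDiff_symmDiff_cancel_left]
  let Der : Finset (Fin n) → Prop := fun A => A = ∅ ∨ ∃ b, XorDerivW Λ (2*t) (A, b)
  let val : Finset (Fin n) → ℝ := fun A =>
    if h : ∃ b, XorDerivW Λ (2*t) (A, b) then (-1 : ℝ) ^ (h.choose).val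
    else if A = ∅ then 1 else 0
  have val_spec : ∀ A b, XorDerivW Λ (2*t) (A, b) → val A = (-1:ℝ) ^ b.val := by
    intro A b h
    have hex : ∃ b, XorDerivW Λ (2*t) (A, b) := ⟨b, h⟩
    simp only [val, dif_pos hex]
    rw [huniq A hex.choose b hex.choose_spec h]
  have val_empty : val (∅ : Finset (Fin n)) = 1 := by
    by_cases hex : ∃ b, XorDerivW Λ (2*t) ((∅ : Finset (Fin n)), b)
    · obtain ⟨b, hb⟩ := hex
      have hb0 : b = 0 := by
        rcases hz2 b with rfl | rfl
        · rfl
        · exact absurd hb hnoref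
      rw [val_spec ∅ b hb, hb0]
      norm_num
    · simp [val, dif_neg hex]
  have val_der : ∀ A, Der A → val A = 1 ∨ val A = -1 := by
    intro A hA
    rcases hA with rfl | ⟨b, hb⟩
    · exact Or.inl val_empty
    · rw [val_spec A b hb]
      rcases Nat.even_or_odd b.val with h | h
      · exact Or.inl (h.neg_one_pow)
      · exact Or.inr (h.neg_one_pow)
  have val_nder : ∀ A, ¬ Der A → val A = 0 := by
    intro A hA
    simp only [Der, not_or] at hA
    simp only [val, dif_neg hA.2, if_neg hA.1]
  let σ' := {S : Finset (Fin n) // S.card ≤ t}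
  let rel : σ' → σ' → Prop := fun S₁ S₂ => Der (symmDiff S₁.1 S₂.1)
  have rel_refl : ∀ S : σ', rel S S := fun S => Or.inl (by simp [symmDiff_self])
  have rel_symm : ∀ {S₁ S₂ : σ'}, rel S₁ S₂ → rel S₂ S₁ := by
    intro S₁ S₂ h
    simpa only [rel, symmDiff_comm] using h
  have rel_trans : ∀ {S₁ S₂ S₃ : σ'}, rel S₁ S₂ → rel S₂ S₃ → rel S₁ S₃ := by
    rintro ⟨A, hA⟩ ⟨B, hB⟩ ⟨C, hC⟩ h₁ h₂
    simp only [rel] at h₁ h₂ ⊢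
    rcases h₁ with h₁ | ⟨b₁, h₁⟩
    · have hAB : A = B := by
        rw [← Finset.bot_eq_empty] at h₁
        exact symmDiff_eq_bot.mp h₁
      rwa [hAB]
    · rcases h₂ with h₂ | ⟨b₂, h₂⟩
      · have hBC : B = C := by
          rw [← Finset.bot_eq_empty] at h₂
          exact symmDiff_eq_bot.mp h₂
        exact Or.inr ⟨b₁, hBC ▸ h₁⟩
      · refine Or.inr ⟨b₁ + b₂, ?_⟩
        have h3 := XorDerivW.res h₁ h₂ (by rw [hid2]; exact hcard A C hA hC)
        rwa [hid2] at h3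
  let st : Setoid σ' := ⟨rel, fun S => rel_refl S, fun h => rel_symm h,
    fun h₁ h₂ => rel_trans h₁ h₂⟩
  let Q := Quotient st
  haveI : DecidableEq Q := Classical.decEq Q
  haveI : Fintype Q := Fintype.ofSurjective (Quotient.mk st) (Quotient.mk_surjective)
  let d := Fintype.card Q
  let eqv : Q ≃ Fin d := Fintype.equivFin Q
  let cls : σ' → Fin d := fun S => eqv (Quotient.mk st S)
  let rep : σ' → σ' := fun S => (Quotient.mk st S).out
  have rep_rel : ∀ S : σ', rel (rep S) S := by
    intro S
    have h : Quotient.mk st (rep S) = Quotient.mk st S := Quotient.out_eq _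
    exact Quotient.exact h
  have rep_eq : ∀ S₁ S₂ : σ', rel S₁ S₂ → rep S₁ = rep S₂ := by
    intro S₁ S₂ h
    simp only [rep]
    rw [Quotient.sound (s := st) h]
  let ε : σ' → ℝ := fun S => val (symmDiff S.1 (rep S).1)
  have ε_pm : ∀ S : σ', ε S = 1 ∨ ε S = -1 := fun S => val_der _ (rel_symm (rep_rel S))
  let empt : σ' := ⟨∅, by simp⟩
  let u : Finset (Fin n) → EuclideanSpace ℝ (Fin d) := fun A =>
    if h : A.card ≤ t then EuclideanSpace.single (cls ⟨A, h⟩) (ε ⟨A, h⟩)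
    else EuclideanSpace.single (cls empt) 1
  have u_eq : ∀ (S : σ'),
      u S.1 = EuclideanSpace.single (cls S) (ε S) := by
    rintro ⟨A, h⟩
    simp only [u, dif_pos h]
  have pow_add : ∀ b₁ b₂ : ZMod 2,
      (-1:ℝ) ^ (b₁ + b₂).val = (-1:ℝ) ^ b₁.val * (-1:ℝ) ^ b₂.val := by
    intro b₁ b₂
    have h2 : ((2 : ZMod 2)).val = 0 := by decide
    have h1 : ((1 : ZMod 2)).val = 1 := by decide
    have h0 : ((0 : ZMod 2)).val = 0 := by decide
    rcases hz2 b₁ with rfl | rfl <;> rcases hz2 b₂ with rfl | rfl <;> norm_num [h0, h1, h2]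
  -- key cocycle computation
  have eps_mul : ∀ S₁ S₂ : σ', rel S₁ S₂ → ε S₁ * ε S₂ = val (symmDiff S₁.1 S₂.1) := by
    intro S₁ S₂ hrel
    have hR : rep S₂ = rep S₁ := (rep_eq S₁ S₂ hrel).symm
    have h₁ : Der (symmDiff S₁.1 (rep S₁).1) := rel_symm (rep_rel S₁)
    have h₂ : Der (symmDiff S₂.1 (rep S₁).1) := by
      have := rel_symm (rep_rel S₂)
      rwa [hR] at this
    simp only [ε, hR]
    rcases h₁ with h₁ | ⟨b₁, h₁⟩
    · have e1 : S₁.1 = (rep S₁).1 := by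
        rw [← Finset.bot_eq_empty] at h₁
        exact symmDiff_eq_bot.mp h₁
      rw [← e1, symmDiff_self, Finset.bot_eq_empty, val_empty, one_mul,
        symmDiff_comm S₂.1]
    · rcases h₂ with h₂ | ⟨b₂, h₂⟩
      · have e2 : S₂.1 = (rep S₁).1 := by
          rw [← Finset.bot_eq_empty] at h₂
          exact symmDiff_eq_bot.mp h₂
        rw [← e2, symmDiff_self, Finset.bot_eq_empty, val_empty, mul_one]
      · have h3 := XorDerivW.res h₁ h₂
          (by rw [hid]; exact hcard S₁.1 S₂.1 S₁.2 S₂.2)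
        rw [hid] at h3
        rw [val_spec _ _ h₁, val_spec _ _ h₂, val_spec _ _ h3, pow_add]
  have inner_eq : ∀ S₁ S₂ : σ',
      (inner ℝ (u S₁.1) (u S₂.1) : ℝ) = val (symmDiff S₁.1 S₂.1) := by
    intro S₁ S₂
    rw [u_eq S₁, u_eq S₂, EuclideanSpace.inner_single_left, EuclideanSpace.single_apply]
    simp only [starRingEnd_apply, star_trivial]
    by_cases hc : rel S₁ S₂
    · have hcls : cls S₁ = cls S₂ := by
        simp only [cls]
        rw [Quotient.sound (s := st) hc]
      rw [if_pos hcls, eps_mul S₁ S₂ hc]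
    · rw [if_neg, mul_zero, val_nder _ hc]
      intro h
      exact hc (Quotient.exact (eqv.injective h))
  refine ⟨d, u, ?_, ?_, ?_⟩
  · intro S hS
    rw [u_eq ⟨S, hS⟩, EuclideanSpace.norm_single]
    rcases ε_pm ⟨S, hS⟩ with h | h <;> rw [h] <;> norm_num
  · intro S₁ S₂ S₃ S₄ h₁ h₂ h₃ h₄ hsd
    rw [inner_eq ⟨S₁, h₁⟩ ⟨S₂, h₂⟩, inner_eq ⟨S₃, h₃⟩ ⟨S₄, h₄⟩]
    exact congrArg val hsd
  · intro T b hmem hT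
    have hder : XorDerivW Λ (2*t) (T, b) := XorDerivW.ax hmem (by show T.card ≤ 2 * t; omega)
    have := inner_eq ⟨T, hT⟩ ⟨∅, by simp⟩
    rw [show symmDiff T (∅ : Finset (Fin n)) = T from by rw [← Finset.bot_eq_empty, symmDiff_bot]] at this
    rw [this]
    exact val_spec T b hder
end

section
/- Let X be a finite abstract simplicial complex of dimension at least 3 and β ∈ Z² \ B². Then for every ⊕-resolution refutation of the edge-variable 3XOR instance associated to (X, β), the 2-chain h ∈ C² at the root of the refutation DAG (defined as the sum of the indicator chains of the triangles at the leaves feeding into the root) satisfies ∂₂ h = 0 and h ∉ B₂; that is, h ∈ Z₂ \ B₂. -/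
namespace AbsSimplicialComplex

variable {V : Type*} [DecidableEq V] [Fintype V]

/-- A ⊕-resolution derivation from the edge-variable 3XOR instance of `(X, β)`:
leaves are labeled by triangles of `X` (i.e. by the equations of the instance),
and each internal node resolves its two incoming nodes. -/
inductive ResTree (X : AbsSimplicialComplex V) : Type _
  | leaf : { s // s ∈ X.sk 2 } → ResTree X
  | node : ResTree X → ResTree X → ResTree X

variable {X : AbsSimplicialComplex V}

/-- The 2-chain `h_ν` of a node: the indicator chain of the triangle at a leaf,
and the sum of the chains of the two incoming nodes at an internal node. -/
def ResTree.chainOf : ResTree X → X.Chain 2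
  | .leaf T => fun s => if s = T then 1 else 0
  | .node a b => a.chainOf + b.chainOf

/-- The right-hand side `b_ν` of the equation at a node. -/
def ResTree.rhsOf (β : X.Chain 2) : ResTree X → ZMod 2
  | .leaf T => β T
  | .node a b => a.rhsOf β + b.rhsOf β

/-- The set `A_ν ⊆ X(1)` of variables in the equation at a node: the three
edges of the triangle at a leaf, and the symmetric difference of the variable
sets of the two incoming nodes at an internal node. -/
def ResTree.varsOf : ResTree X → Finset { e // e ∈ X.sk 1 }
  | .leaf T => Finset.univ.filter fun e => e.val ⊆ T.val
  | .node a b => symmDiff a.varsOf b.varsOf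

/-- The width of a derivation: the maximum number of variables in the equation
at any node. -/
def ResTree.widthOf : ResTree X → ℕ
  | .leaf T => ((ResTree.leaf T : ResTree X).varsOf).card
  | .node a b => max ((ResTree.node a b).varsOf).card (max a.widthOf b.widthOf)

end AbsSimplicialComplex

namespace AbsSimplicialComplex

variable {V : Type*} [DecidableEq V] [Fintype V] {X : AbsSimplicialComplex V}

lemma pairing_adjoint (β : X.Chain 2) (g : X.Chain 3) :
    X.pairing 2 β (X.boundary 2 g) = X.pairing 3 (X.delta 2 β) g := by
  simp only [pairing, boundary, delta, LinearMap.coe_mk, AddHom.coe_mk]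
  simp only [Finset.mul_sum, Finset.sum_mul]
  rw [Finset.sum_comm]
  refine Finset.sum_congr rfl fun t _ => Finset.sum_congr rfl fun s _ => ?_
  split <;> ring

lemma rhsOf_eq_pairing (β : X.Chain 2) (ν : ResTree X) :
    ν.rhsOf β = X.pairing 2 β ν.chainOf := by
  induction ν with
  | leaf T =>
    simp only [ResTree.rhsOf, ResTree.chainOf, pairing]
    rw [Finset.sum_eq_single T]
    · simp
    · intro b _ hb; simp [hb]
    · simp
  | node a b ha hb =>
    simp only [ResTree.rhsOf, ResTree.chainOf, pairing, ha, hb]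
    rw [← Finset.sum_add_distrib]
    exact Finset.sum_congr rfl fun s _ => by simp [Pi.add_apply]; ring

lemma boundary_chainOf (ν : ResTree X) (e : { e // e ∈ X.sk 1 }) :
    X.boundary 1 ν.chainOf e = if e ∈ ν.varsOf then 1 else 0 := by
  induction ν with
  | leaf T =>
    simp only [ResTree.chainOf, ResTree.varsOf, boundary, LinearMap.coe_mk, AddHom.coe_mk,
      Finset.mem_filter, Finset.mem_univ, true_and]
    rw [Finset.sum_eq_single T]
    · simp
    · intro b _ hb; simp [hb]
    · simp
  | node a b ha hb =>
    simp only [ResTree.chainOf, ResTree.varsOf, map_add, Pi.add_apply, ha, hb]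
    rcases Decidable.em (e ∈ a.varsOf) with h1 | h1 <;>
      rcases Decidable.em (e ∈ b.varsOf) with h2 | h2 <;>
      simp [Finset.mem_symmDiff, h1, h2] <;> decide

end AbsSimplicialComplex

open AbsSimplicialComplex in
/-- If `β ∈ Z² \ B²`, then for every ⊕-resolution refutation of
the edge-variable 3XOR instance of `(X, β)` (a derivation whose root equation
is `(∅, 1)`), the 2-chain `h` at the root satisfies `∂₂ h = 0` and `h ∉ B₂`;
that is, `h ∈ Z₂ \ B₂`. -/
theorem refutation_root_chain_nontrivial_cycle
    {V : Type*} [DecidableEq V] [Fintype V]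
    (X : AbsSimplicialComplex V) (hdim : ∃ s ∈ X.faces, 4 ≤ s.card)
    (β : X.Chain 2) (hβZ : β ∈ LinearMap.ker (X.delta 2))
    (hβB : β ∉ LinearMap.range (X.delta 1)) :
    ∀ ν : ResTree X, ν.varsOf = ∅ → ν.rhsOf β = 1 →
      X.boundary 1 ν.chainOf = 0 ∧
        ν.chainOf ∉ LinearMap.range (X.boundary 2) := by
  intro ν hvars hrhs
  constructor
  · funext e
    rw [boundary_chainOf, hvars]
    simp
  · rintro ⟨g, hg⟩
    have h1 : X.pairing 2 β ν.chainOf = 1 := by rw [← rhsOf_eq_pairing]; exact hrhs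
    rw [← hg, pairing_adjoint] at h1
    rw [LinearMap.mem_ker.mp hβZ] at h1
    simp [pairing] at h1
end
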